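/- Let G be a graph of order n in which every vertex has even degree and whose Seidel matrix is singular, and let m be the number of edges of G. Then m ≡ (n-1)/4 (mod 4). -/
import Mathlib


open Matrix

def seidelMatrix {n : ℕ} (G : SimpleGraph (Fin n)) [DecidableRel G.Adj] :
    Matrix (Fin n) (Fin n) ℤ :=
  Matrix.of fun i j => if i = j then 0 else if G.Adj i j then -1 else 1

/-- From any nonzero integer kernel vector we can find a kernel vector with an
odd coordinate, by repeatedly dividing by 2. -/
lemma exists_odd_kernel {n : ℕ} (S : Matrix (Fin n) (Fin n) ℤ) (N : ℕ) :
    ∀ x : Fin n → ℤ, (∑ i, (x i).natAbs) ≤ N → x ≠ 0 → S.mulVec x = 0 →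
    ∃ y : Fin n → ℤ, S.mulVec y = 0 ∧ ∃ i, Odd (y i) := by
  induction N with
  | zero =>
    intro x hx hne _
    exfalso
    apply hne
    funext i
    have hle : (x i).natAbs ≤ ∑ j, (x j).natAbs :=
      Finset.single_le_sum (f := fun j => (x j).natAbs) (fun j _ => Nat.zero_le _)
        (Finset.mem_univ i)
    have : (x i).natAbs = 0 := by omega
    simpa using Int.natAbs_eq_zero.mp this
  | succ N ih =>
    intro x hx hne hker
    by_cases hodd : ∃ i, Odd (x i)
    · exact ⟨x, hker, hodd⟩
    · push_neg at hodd
      have hev : ∀ i, ∃ z, x i = 2 * z := by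
        intro i
        have h := hodd i
        rw [Int.not_odd_iff_even] at h
        obtain ⟨r, hr⟩ := h
        exact ⟨r, by omega⟩
      choose z hz using hev
      have hker' : S.mulVec z = 0 := by
        funext i
        have h0 : (S.mulVec x) i = 0 := congrFun hker i
        have h2 : (S.mulVec x) i = 2 * (S.mulVec z) i := by
          simp only [Matrix.mulVec, dotProduct, Finset.mul_sum]
          exact Finset.sum_congr rfl fun j _ => by rw [hz j]; ring
        have : (2 : ℤ) * (S.mulVec z) i = 0 := by rw [← h2, h0]
        simpa using this
      have hzne : z ≠ 0 := by
        intro h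
        apply hne
        funext i
        rw [hz i, congrFun h i]
        simp
      apply ih z ?_ hzne hker'
      have hi0 : ∃ i, z i ≠ 0 := Function.ne_iff.mp hzne
      obtain ⟨i0, hi0⟩ := hi0
      have hlt : (∑ i, (z i).natAbs) < ∑ i, (x i).natAbs := by
        refine Finset.sum_lt_sum (fun i _ => ?_) ⟨i0, Finset.mem_univ i0, ?_⟩
        · rw [hz i, Int.natAbs_mul]
          have h2' : ((2:ℤ)).natAbs = 2 := rfl
          rw [h2']
          omega
        · rw [hz i0, Int.natAbs_mul]
          have h2' : ((2:ℤ)).natAbs = 2 := rfl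
          have : 0 < (z i0).natAbs := Int.natAbs_pos.mpr hi0
          rw [h2']
          omega
      omega

theorem seidel_singular_even_graph_size {n : ℕ} (G : SimpleGraph (Fin n))
    [DecidableRel G.Adj]
    (heven : ∀ v, Even (G.degree v))
    (hsing : (seidelMatrix G).det = 0) :
    G.edgeFinset.card % 4 = ((n - 1) / 4) % 4 := by
  classical
  -- get a kernel vector with an odd coordinate
  obtain ⟨x0, hx0ne, hx0⟩ := (Matrix.exists_mulVec_eq_zero_iff).mpr hsing
  obtain ⟨x, hker, i0, hi0⟩ :=
    exists_odd_kernel (seidelMatrix G) (∑ i, (x0 i).natAbs) x0 le_rfl hx0ne hx0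
  have hn1 : 1 ≤ n := i0.pos
  set σ : ℤ := ∑ j, x j with hσdef
  set y : Fin n → ℤ := fun i => ∑ j, if G.Adj i j then x j else 0 with hydef
  -- per-coordinate kernel equation
  have hx_eq : ∀ i, x i = σ - 2 * y i := by
    intro i
    have h0 : (seidelMatrix G).mulVec x i = 0 := congrFun hker i
    have hterm : ∀ j, seidelMatrix G i j * x j
        = x j - (if i = j then x j else 0) - 2 * (if G.Adj i j then x j else 0) := by
      intro j
      by_cases h1 : i = j
      · subst h1; simp [seidelMatrix, G.irrefl]
      · by_cases h2 : G.Adj i j <;> simp [seidelMatrix, h1, h2] <;> ring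
    have hmv : (seidelMatrix G).mulVec x i = σ - x i - 2 * y i := by
      simp only [Matrix.mulVec, dotProduct]
      rw [Finset.sum_congr rfl (fun j _ => hterm j)]
      rw [Finset.sum_sub_distrib, Finset.sum_sub_distrib, ← Finset.mul_sum]
      simp [hσdef, hydef]
    rw [hmv] at h0
    linarith
  -- σ is odd, hence every coordinate is odd
  have hσodd : Odd σ := by
    obtain ⟨k, hk⟩ := hi0
    exact ⟨k + y i0, by have := hx_eq i0; omega⟩
  have hxodd : ∀ i, Odd (x i) := by
    intro i
    obtain ⟨s, hs⟩ := hσodd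
    exact ⟨s - y i, by have := hx_eq i; omega⟩
  -- degree sums
  have hdeg : ∀ i, (∑ j, if G.Adj i j then (1:ℤ) else 0) = (G.degree i : ℤ) := by
    intro i
    rw [Finset.sum_boole]
    norm_cast
    rw [SimpleGraph.degree, SimpleGraph.neighborFinset_eq_filter]
  -- each y i is even
  have hyev : ∀ i, Even (y i) := by
    intro i
    have hsplit : y i = (∑ j, if G.Adj i j then x j - 1 else 0)
        + (∑ j, if G.Adj i j then (1:ℤ) else 0) := by
      rw [← Finset.sum_add_distrib]
      apply Finset.sum_congr rfl
      intro j _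
      by_cases h : G.Adj i j <;> simp [h]
    rw [hsplit]
    apply Even.add
    · apply Finset.even_sum
      intro j _
      by_cases h : G.Adj i j
      · simp only [h, if_true]
        obtain ⟨k, hk⟩ := hxodd j
        exact ⟨k, by omega⟩
      · simp [h]
    · rw [hdeg i]
      exact_mod_cast (heven i).natCast (α := ℤ)
  -- write x i = σ - 4 c i
  have hc : ∀ i, ∃ c, x i = σ - 4 * c := by
    intro i
    obtain ⟨r, hr⟩ := hyev i
    exact ⟨r, by have := hx_eq i; omega⟩
  choose c hxc using hc
  set m' : ℤ := (G.edgeFinset.card : ℤ) with hm'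
  set B : ℤ := ∑ i, c i with hB
  set B2 : ℤ := ∑ i, c i * c i with hB2
  set Q : ℤ := ∑ i, x i * x i with hQ
  set W : ℤ := ∑ i, x i * y i with hW
  set S1 : ℤ := ∑ i, (G.degree i : ℤ) * c i with hS1
  set U3 : ℤ := ∑ i, ∑ j, (if G.Adj i j then (1:ℤ) else 0) * (c i * c j) with hU3
  -- identity I1
  have h1 : σ = (n:ℤ) * σ - 4 * B := by
    have hs : (∑ j, x j) = (n:ℤ) * σ - 4 * B := by
      rw [Finset.sum_congr rfl fun i _ => hxc i, Finset.sum_sub_distrib, Finset.sum_const,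
        Finset.card_univ, Fintype.card_fin, nsmul_eq_mul, ← Finset.mul_sum, ← hB]
    conv_lhs => rw [hσdef]
    exact hs
  -- identity I2
  have h2 : Q = σ * σ - 2 * W := by
    have hcong : (∑ i, x i * x i) = ∑ i, (σ * x i - 2 * (x i * y i)) :=
      Finset.sum_congr rfl fun i _ => by nth_rewrite 1 [hx_eq i]; ring
    rw [hQ, hcong, Finset.sum_sub_distrib, ← Finset.mul_sum, ← Finset.mul_sum,
      ← hσdef, ← hW]
    all_goals ring
  -- identity I3
  have h3 : Q = (n:ℤ) * (σ * σ) - 8 * σ * B + 16 * B2 := by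
    rw [hQ]
    have : ∀ i, x i * x i = σ * σ - 8 * σ * c i + 16 * (c i * c i) := by
      intro i; rw [hxc i]; ring
    rw [Finset.sum_congr rfl (fun i _ => this i)]
    rw [Finset.sum_add_distrib, Finset.sum_sub_distrib, Finset.sum_const,
      Finset.card_univ, Fintype.card_fin, ← Finset.mul_sum, ← Finset.mul_sum,
      ← hB, ← hB2]
    push_cast
    ring
  -- identity I4 : the double sum expansion of W
  have hWdd : W = ∑ i, ∑ j, (if G.Adj i j then (1:ℤ) else 0) * (x i * x j) := by
    rw [hW]
    apply Finset.sum_congr rfl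
    intro i _
    rw [hydef, Finset.mul_sum]
    apply Finset.sum_congr rfl
    intro j _
    by_cases h : G.Adj i j <;> simp [h]
  have h4 : W = 2 * m' * (σ * σ) - 8 * σ * S1 + 16 * U3 := by
    have hpt : ∀ i j, (if G.Adj i j then (1:ℤ) else 0) * (x i * x j)
        = (if G.Adj i j then (1:ℤ) else 0) * (σ * σ)
          - 4 * σ * ((if G.Adj i j then (1:ℤ) else 0) * c i)
          - 4 * σ * ((if G.Adj i j then (1:ℤ) else 0) * c j)
          + 16 * ((if G.Adj i j then (1:ℤ) else 0) * (c i * c j)) := by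
      intro i j; rw [hxc i, hxc j]; ring
    rw [hWdd]
    rw [Finset.sum_congr rfl (fun i _ => Finset.sum_congr rfl (fun j _ => hpt i j))]
    have hsplit : (∑ i, ∑ j, ((if G.Adj i j then (1:ℤ) else 0) * (σ * σ)
          - 4 * σ * ((if G.Adj i j then (1:ℤ) else 0) * c i)
          - 4 * σ * ((if G.Adj i j then (1:ℤ) else 0) * c j)
          + 16 * ((if G.Adj i j then (1:ℤ) else 0) * (c i * c j))))
        = (∑ i, ∑ j, (if G.Adj i j then (1:ℤ) else 0)) * (σ * σ)
          - 4 * σ * (∑ i, ∑ j, (if G.Adj i j then (1:ℤ) else 0) * c i)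
          - 4 * σ * (∑ i, ∑ j, (if G.Adj i j then (1:ℤ) else 0) * c j)
          + 16 * (∑ i, ∑ j, (if G.Adj i j then (1:ℤ) else 0) * (c i * c j)) := by
      simp only [Finset.sum_add_distrib, Finset.sum_sub_distrib, ← Finset.mul_sum,
        ← Finset.sum_mul]
    rw [hsplit]
    have hU0 : (∑ i, ∑ j, (if G.Adj i j then (1:ℤ) else 0)) = 2 * m' := by
      rw [Finset.sum_congr rfl (fun i _ => hdeg i)]
      rw [hm']
      rw [← Nat.cast_sum]
      rw [SimpleGraph.sum_degrees_eq_twice_card_edges]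
      push_cast
      ring
    have hU1 : (∑ i, ∑ j, (if G.Adj i j then (1:ℤ) else 0) * c i) = S1 := by
      rw [hS1]
      apply Finset.sum_congr rfl
      intro i _
      rw [← Finset.sum_mul, hdeg i]
    have hU2 : (∑ i, ∑ j, (if G.Adj i j then (1:ℤ) else 0) * c j) = S1 := by
      rw [Finset.sum_comm, hS1]
      apply Finset.sum_congr rfl
      intro j _
      rw [← Finset.sum_mul]
      congr 1
      rw [← hdeg j]
      apply Finset.sum_congr rfl
      intro i _
      simp [G.adj_comm]
    rw [hU0, hU1, hU2, ← hU3]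
    ring
  -- S1 is even
  have hS1ev : Even S1 := by
    rw [hS1]
    apply Finset.even_sum
    intro i _
    obtain ⟨k, hk⟩ := heven i
    exact ⟨k * c i, by rw [hk]; push_cast; ring⟩
  obtain ⟨s1, hs1⟩ := hS1ev
  -- key divisibility identity
  have hkey : ((n:ℤ) - 1 - 4 * m') * (σ * σ) = 16 * (B2 - 2 * σ * s1 + 2 * U3) := by
    linear_combination h3 - h2 + 2 * h4 - 2 * σ * h1 - 16 * σ * hs1
  -- σ*σ = 8u+1
  obtain ⟨e, he⟩ := hσodd
  have hesq : Even (e * (e + 1)) := Int.even_mul_succ_self e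
  obtain ⟨u, hu⟩ := hesq
  have hsq : σ * σ = 8 * u + 1 := by rw [he]; linear_combination 4 * hu
  -- n - 1 is even
  have hnev : Even ((n:ℤ) - 1) := by
    have hmul : ((n:ℤ) - 1) * σ = 4 * B := by linear_combination -h1
    rcases Int.even_mul.mp ⟨2 * B, by rw [hmul]; ring⟩ with h | h
    · exact h
    · exact absurd (⟨e, he⟩ : Odd σ) (Int.not_odd_iff_even.mpr h)
  obtain ⟨w, hw⟩ := hnev
  have hw' : (n:ℤ) - 1 = 2 * w := by omega
  have hfin : (n:ℤ) - 1 - 4 * m' = 16 * ((B2 - 2 * σ * s1 + 2 * U3) - u * (w - 2 * m')) := by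
    linear_combination hkey - ((n:ℤ) - 1 - 4 * m') * hsq - 8 * u * hw'
  obtain ⟨zz, hzz⟩ : ∃ z : ℤ, (n:ℤ) - 1 - 4 * (G.edgeFinset.card : ℤ) = 16 * z := ⟨_, hfin⟩
  omega
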